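/- In the Gumbel-max trick, the argmax is distributed according to P: if (E(a))_{a∈Σ} are i.i.d. standard Gumbel and a* = argmax_a {log P(a) + E(a)}, then P(a* = a) = P(a) for every a ∈ Σ. -/

import Mathlib

open MeasureTheory

open MeasureTheory Set Filter Real Topology

namespace GumbelAux

noncomputable def F (p x : ℝ) : ℝ := Real.exp (-(p * Real.exp (-x)))
noncomputable def f (p x : ℝ) : ℝ := p * Real.exp (-x) * Real.exp (-(p * Real.exp (-x)))

lemma f_nonneg (p x : ℝ) (hp : 0 ≤ p) : 0 ≤ f p x := by
  unfold f; positivity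

lemma hasDerivAt_F (p x : ℝ) : HasDerivAt (F p) (f p x) x := by
  have h1 : HasDerivAt (fun x : ℝ => -(p * Real.exp (-x))) (p * Real.exp (-x)) x := by
    have h0 : HasDerivAt (fun x : ℝ => -x) (-1 : ℝ) x := hasDerivAt_neg x
    have : HasDerivAt (fun x : ℝ => -(p * Real.exp (-x))) (-(p * (Real.exp (-x) * -1))) x :=
      ((h0.exp).const_mul p).neg
    convert this using 1
    ring
  have h2 := h1.exp
  have : f p x = Real.exp (-(p * Real.exp (-x))) * (p * Real.exp (-x)) := by
    unfold f; ring
  rw [this]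
  show HasDerivAt (fun x => Real.exp (-(p * Real.exp (-x)))) _ x
  exact h2

lemma tendsto_F_atBot {p : ℝ} (hp : 0 < p) : Tendsto (F p) atBot (𝓝 0) := by
  have h1 : Tendsto (fun x : ℝ => Real.exp (-x)) atBot atTop :=
    Real.tendsto_exp_atTop.comp tendsto_neg_atBot_atTop
  have h2 : Tendsto (fun x : ℝ => p * Real.exp (-x)) atBot atTop := h1.const_mul_atTop hp
  have h3 : Tendsto (fun x : ℝ => -(p * Real.exp (-x))) atBot atBot := tendsto_neg_atTop_atBot.comp h2
  exact Real.tendsto_exp_atBot.comp h3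

lemma tendsto_F_atTop (p : ℝ) : Tendsto (F p) atTop (𝓝 1) := by
  have h1 : Tendsto (fun x : ℝ => Real.exp (-x)) atTop (𝓝 0) := Real.tendsto_exp_neg_atTop_nhds_zero
  have h2 : Tendsto (fun x : ℝ => -(p * Real.exp (-x))) atTop (𝓝 (-(p * 0))) :=
    ((h1.const_mul p).neg)
  have h3 := (Real.continuous_exp.tendsto _).comp h2
  simp only [mul_zero, neg_zero, Real.exp_zero] at h3
  exact h3

lemma f_continuous (p : ℝ) : Continuous (f p) := by
  unfold f; continuity

lemma f_integrable {p : ℝ} (hp : 0 < p) : Integrable (f p) := by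
  have key : ∀ x : ℝ, f p x ≤ 4 / p * Real.exp x := by
    intro x
    set t := Real.exp (-x) with ht
    have htpos : 0 < t := Real.exp_pos _
    have h1 : (p * t / 2) ^ 2 ≤ Real.exp (p * t) := by
      have h2 : 1 + p * t / 2 ≤ Real.exp (p * t / 2) := by
        have := Real.add_one_le_exp (p * t / 2); linarith
      have h3 : (p * t / 2) ^ 2 ≤ (1 + p * t / 2) ^ 2 := by nlinarith
      calc (p * t / 2) ^ 2 ≤ (1 + p * t / 2) ^ 2 := h3
        _ ≤ (Real.exp (p * t / 2)) ^ 2 := by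
            apply pow_le_pow_left₀ (by positivity) h2
        _ = Real.exp (p * t) := by
            rw [← Real.exp_nat_mul]; ring_nf
    have h4 : Real.exp (-(p * t)) ≤ 4 / (p * t) ^ 2 := by
      have h0 : (p * t) ^ 2 / 4 ≤ Real.exp (p * t) := by nlinarith [h1]
      rw [Real.exp_neg]
      calc (Real.exp (p * t))⁻¹ = 1 / Real.exp (p * t) := (one_div _).symm
        _ ≤ 1 / ((p * t) ^ 2 / 4) := one_div_le_one_div_of_le (by positivity) h0
        _ = 4 / (p * t) ^ 2 := by field_simp
    have h5 : f p x = p * t * Real.exp (-(p * t)) := rfl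
    have h6 : p * t * Real.exp (-(p * t)) ≤ p * t * (4 / (p * t) ^ 2) := by
      apply mul_le_mul_of_nonneg_left h4 (by positivity)
    have h7 : p * t * (4 / (p * t) ^ 2) = 4 / (p * t) := by
      field_simp
    have h8 : Real.exp x = 1 / t := by
      rw [ht, eq_div_iff (ne_of_gt htpos), ← Real.exp_add]
      simp
    rw [h5, h8]
    rw [h7] at h6
    calc p * t * Real.exp (-(p * t)) ≤ 4 / (p * t) := h6
      _ = 4 / p * (1 / t) := by field_simp
  rw [← integrableOn_univ, ← Set.Iic_union_Ioi (a := (0:ℝ))]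
  apply IntegrableOn.union
  · apply Integrable.mono' ((integrableOn_exp_Iic 0).const_mul (4 / p))
    · exact (f_continuous p).aestronglyMeasurable.restrict
    · filter_upwards with x
      rw [Real.norm_eq_abs, abs_of_nonneg (f_nonneg p x hp.le)]
      exact key x
  · apply Integrable.mono' ((exp_neg_integrableOn_Ioi 0 one_pos).const_mul p)
    · exact (f_continuous p).aestronglyMeasurable.restrict
    · filter_upwards with x
      rw [Real.norm_eq_abs, abs_of_nonneg (f_nonneg p x hp.le)]
      have h1 : Real.exp (-(p * Real.exp (-x))) ≤ 1 := by
        rw [Real.exp_le_one_iff]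
        simp only [Left.neg_nonpos_iff]
        positivity
      calc f p x ≤ p * Real.exp (-x) * 1 :=
            mul_le_mul_of_nonneg_left h1 (by positivity)
        _ = p * Real.exp (-1*x) := by rw [mul_one]; ring_nf

lemma integral_f_Iic {p : ℝ} (hp : 0 < p) (s : ℝ) : ∫ x in Iic s, f p x = F p s := by
  have := integral_Iic_of_hasDerivAt_of_tendsto' (a := s)
    (fun x _ => hasDerivAt_F p x) ((f_integrable hp).integrableOn) (tendsto_F_atBot hp)
  simpa using this

lemma integral_f {p : ℝ} (hp : 0 < p) : ∫ x, f p x = 1 := by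
  have := integral_of_hasDerivAt_of_tendsto (hasDerivAt_F p) (f_integrable hp)
    (tendsto_F_atBot hp) (tendsto_F_atTop p)
  simpa using this

end GumbelAux

namespace GumbelAux

noncomputable def gumbel : Measure ℝ :=
  (volume : Measure ℝ).withDensity fun x => ENNReal.ofReal (f 1 x)

lemma gumbel_Iic (s : ℝ) : gumbel (Iic s) = ENNReal.ofReal (Real.exp (-Real.exp (-s))) := by
  rw [gumbel, withDensity_apply _ measurableSet_Iic]
  rw [← ofReal_integral_eq_lintegral_ofReal ((f_integrable one_pos).integrableOn)
    (Filter.Eventually.of_forall fun x => f_nonneg 1 x one_pos.le)]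
  rw [integral_f_Iic one_pos s]
  simp [F]

instance : IsProbabilityMeasure gumbel := by
  constructor
  rw [gumbel, withDensity_apply _ MeasurableSet.univ, setLIntegral_univ]
  rw [← ofReal_integral_eq_lintegral_ofReal (f_integrable one_pos)
    (Filter.Eventually.of_forall fun x => f_nonneg 1 x one_pos.le)]
  rw [integral_f one_pos]
  simp

lemma gumbel_singleton (x : ℝ) : gumbel {x} = 0 := by
  have : (volume : Measure ℝ) {x} = 0 := measure_singleton x
  exact (withDensity_absolutelyContinuous _ _) this

/-- the key lintegral -/
lemma lintegral_gumbel {q : ℝ} (hq : 0 ≤ q) :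
    ∫⁻ t, ENNReal.ofReal (Real.exp (-(q * Real.exp (-t)))) ∂gumbel
      = ENNReal.ofReal (1 / (1 + q)) := by
  have hmeas : Measurable fun t => ENNReal.ofReal (Real.exp (-(q * Real.exp (-t)))) := by
    apply Measurable.ennreal_ofReal
    exact (Real.continuous_exp.comp ((continuous_const.mul (Real.continuous_exp.comp
      continuous_neg)).neg)).measurable
  rw [gumbel, lintegral_withDensity_eq_lintegral_mul _
    (by apply Measurable.ennreal_ofReal; exact (f_continuous 1).measurable) hmeas]
  have hp1q : 0 < 1 + q := by linarith
  have heq : ∀ t : ℝ, (ENNReal.ofReal (f 1 t)) * ENNReal.ofReal (Real.exp (-(q * Real.exp (-t))))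
      = ENNReal.ofReal (1 / (1 + q) * f (1 + q) t) := by
    intro t
    rw [← ENNReal.ofReal_mul (f_nonneg 1 t one_pos.le)]
    congr 1
    unfold f
    have hE : Real.exp (-((1+q) * Real.exp (-t)))
        = Real.exp (-(1 * Real.exp (-t))) * Real.exp (-(q * Real.exp (-t))) := by
      rw [← Real.exp_add]; congr 1; ring
    rw [hE]
    field_simp
  simp only [Pi.mul_apply, heq]
  rw [← ofReal_integral_eq_lintegral_ofReal ((f_integrable hp1q).const_mul _)
    (Filter.Eventually.of_forall fun x => by
      have := f_nonneg (1+q) x hp1q.le; positivity)]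
  rw [integral_const_mul, integral_f hp1q, mul_one]

end GumbelAux

/-- Gumbel-max trick: if `E a` are i.i.d. standard Gumbel variables and `astar` is the
argmax of `log P a + E a`, then `astar` is distributed according to `P`:
`P(astar = a) = P a` for every `a`. -/
theorem gumbel_max_trick
    {Ω : Type*} [MeasurableSpace Ω] (μ : Measure Ω) [IsProbabilityMeasure μ]
    {S : Type*} [Fintype S] [Nonempty S]
    (P : S → ℝ) (hP : ∀ a, 0 < P a) (hPsum : ∑ a, P a = 1)
    (E : S → Ω → ℝ) (hEmeas : ∀ a, Measurable (E a))
    (hindep : ProbabilityTheory.iIndepFun E μ)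
    (hgumbel : ∀ a, ∀ g : ℝ,
      μ {ω | E a ω ≤ g} = ENNReal.ofReal (Real.exp (-Real.exp (-g))))
    (astar : Ω → S)
    (hastar : ∀ ω, ∀ a : S,
      Real.log (P a) + E a ω ≤ Real.log (P (astar ω)) + E (astar ω) ω) :
    ∀ a : S, (μ {ω | astar ω = a}).toReal = P a := by
  classical
  intro a
  have hPa : 0 < P a := hP a
  set γ : Measure ℝ := GumbelAux.gumbel with hγ
  -- marginals
  have hmap : ∀ b, μ.map (E b) = γ := by
    intro b
    haveI : IsProbabilityMeasure (μ.map (E b)) :=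
      Measure.isProbabilityMeasure_map (hEmeas b).aemeasurable
    refine MeasureTheory.Measure.ext_of_Iic _ _ fun s => ?_
    rw [Measure.map_apply (hEmeas b) measurableSet_Iic, hγ, GumbelAux.gumbel_Iic]
    exact hgumbel b s
  set T := {b : S // b ≠ a} with hT
  set Ψ : Ω → (T → ℝ) := fun ω b => E b.1 ω with hΨdef
  have hΨ : Measurable Ψ := measurable_pi_lambda _ fun b => hEmeas b.1
  -- independence of E a and Ψ
  have hindep2 : ProbabilityTheory.IndepFun (E a) Ψ μ := by
    have hdisj : Disjoint ({a} : Finset S) (Finset.univ.erase a) :=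
      Finset.disjoint_singleton_left.2 (Finset.notMem_erase a _)
    have h0 := hindep.indepFun_finset ({a} : Finset S) (Finset.univ.erase a) hdisj hEmeas
    have h1 := h0.comp
      (φ := fun u : ({x // x ∈ ({a} : Finset S)} → ℝ) => u ⟨a, Finset.mem_singleton_self a⟩)
      (ψ := fun u : ({x // x ∈ Finset.univ.erase a} → ℝ) =>
        fun b : T => u ⟨b.1, Finset.mem_erase.2 ⟨b.2, Finset.mem_univ _⟩⟩)
      (show Measurable (fun u : ({x // x ∈ ({a} : Finset S)} → ℝ) => u ⟨a, Finset.mem_singleton_self a⟩) from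
        measurable_pi_apply _)
      (measurable_pi_lambda _ fun b => measurable_pi_apply _)
    exact h1
  set ρ : Measure (T → ℝ) := μ.map Ψ with hρ
  haveI : IsProbabilityMeasure ρ := Measure.isProbabilityMeasure_map hΨ.aemeasurable
  have hpairlaw : μ.map (fun ω => (E a ω, Ψ ω)) = (μ.map (E a)).prod ρ :=
    (ProbabilityTheory.indepFun_iff_map_prod_eq_prod_map_map
      (hEmeas a).aemeasurable hΨ.aemeasurable).1 hindep2
  set c : S → ℝ := fun b => Real.log (P a) - Real.log (P b) with hc
  set Aw : Set Ω := {ω | ∀ b, b ≠ a → E b ω ≤ E a ω + c b} with hAw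
  set As : Set Ω := {ω | ∀ b, b ≠ a → E b ω < E a ω + c b} with hAs
  set q : ℝ := (1 - P a) / P a with hq
  have hsum' : ∑ b ∈ Finset.univ.erase a, P b = 1 - P a := by
    have h0 := Finset.add_sum_erase Finset.univ P (Finset.mem_univ a)
    rw [hPsum] at h0
    linarith
  have hq0 : 0 ≤ q := by
    have h0 : (0:ℝ) ≤ ∑ b ∈ Finset.univ.erase a, P b :=
      Finset.sum_nonneg fun b _ => (hP b).le
    rw [hq]
    apply div_nonneg _ hPa.le
    linarith
  set r : S → ℝ := fun b => if b = a then 0 else P b / P a with hr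
  have hrsum : ∑ b, r b = q := by
    rw [← Finset.add_sum_erase Finset.univ r (Finset.mem_univ a)]
    rw [hr]
    simp only [if_pos rfl, zero_add]
    rw [Finset.sum_congr rfl (fun b hb => if_neg (Finset.ne_of_mem_erase hb))]
    rw [← Finset.sum_div, hsum', hq]
    simp
  -- the box probability
  have hbox : ∀ t : ℝ, ρ {v : T → ℝ | ∀ b : T, v b ≤ t + c b.1}
      = ENNReal.ofReal (Real.exp (-(q * Real.exp (-t)))) := by
    intro t
    have hboxmeas : MeasurableSet {v : T → ℝ | ∀ b : T, v b ≤ t + c b.1} := by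
      have : {v : T → ℝ | ∀ b : T, v b ≤ t + c b.1}
          = ⋂ b : T, {v : T → ℝ | v b ≤ t + c b.1} := by
        ext v; simp
      rw [this]
      exact MeasurableSet.iInter fun b =>
        measurableSet_le (measurable_pi_apply b) measurable_const
    rw [hρ, Measure.map_apply hΨ hboxmeas]
    have hpre : Ψ ⁻¹' {v : T → ℝ | ∀ b : T, v b ≤ t + c b.1}
        = ⋂ b : S, {ω | b ≠ a → E b ω ≤ t + c b} := by
      ext ω
      simp only [Set.mem_preimage, Set.mem_setOf_eq, Set.mem_iInter]
      constructor
      · intro h b hb; exact h ⟨b, hb⟩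
      · intro h b; exact h b.1 b.2
    rw [hpre, hindep.meas_iInter (fun b => ?_)]
    swap
    · refine ⟨{x : ℝ | b ≠ a → x ≤ t + c b}, ?_, rfl⟩
      have : {x : ℝ | b ≠ a → x ≤ t + c b}
          = if b = a then Set.univ else Set.Iic (t + c b) := by
        split_ifs with hb
        · ext x; simp [hb]
        · ext x; simp [hb]
      rw [this]
      split_ifs
      exacts [MeasurableSet.univ, measurableSet_Iic]
    have hfac : ∀ b : S, μ {ω | b ≠ a → E b ω ≤ t + c b}
        = ENNReal.ofReal (Real.exp (-(r b * Real.exp (-t)))) := by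
      intro b
      by_cases hb : b = a
      · have h1 : {ω : Ω | b ≠ a → E b ω ≤ t + c b} = Set.univ := by
          ext ω; simp [hb]
        rw [h1, measure_univ, hr]
        simp [hb]
      · have h1 : {ω : Ω | b ≠ a → E b ω ≤ t + c b} = {ω | E b ω ≤ t + c b} := by
          ext ω; simp [hb]
        rw [h1, hgumbel b (t + c b)]
        congr 2
        rw [neg_add, Real.exp_add, hc]
        simp only []
        rw [neg_sub, Real.exp_sub, Real.exp_log (hP b), Real.exp_log hPa]
        simp only [hr, if_neg hb]
        ring
    rw [Finset.prod_congr rfl fun b _ => hfac b]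
    rw [← ENNReal.ofReal_prod_of_nonneg (fun b _ => (Real.exp_pos _).le)]
    congr 1
    rw [← Real.exp_sum]
    congr 1
    rw [← hrsum, Finset.sum_mul, ← Finset.sum_neg_distrib]
  -- the event as a preimage
  set B : Set (ℝ × (T → ℝ)) := {tv | ∀ b : T, tv.2 b ≤ tv.1 + c b.1} with hB
  have hBmeas : MeasurableSet B := by
    have : B = ⋂ b : T, {tv : ℝ × (T → ℝ) | tv.2 b ≤ tv.1 + c b.1} := by
      ext tv; simp [hB]
    rw [this]
    exact MeasurableSet.iInter fun b => measurableSet_le (by fun_prop) (by fun_prop)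
  have hAwpre : Aw = (fun ω => (E a ω, Ψ ω)) ⁻¹' B := by
    ext ω
    simp only [hAw, hB, Set.mem_preimage, Set.mem_setOf_eq]
    constructor
    · intro h b; exact h b.1 b.2
    · intro h b hb; exact h ⟨b, hb⟩
  have hμAw : μ Aw = ENNReal.ofReal (P a) := by
    rw [hAwpre, ← Measure.map_apply ((hEmeas a).prodMk hΨ) hBmeas, hpairlaw, hmap a,
      Measure.prod_apply hBmeas]
    have hsec : ∀ t : ℝ, ρ (Prod.mk t ⁻¹' B)
        = ENNReal.ofReal (Real.exp (-(q * Real.exp (-t)))) := by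
      intro t
      have h2 : Prod.mk t ⁻¹' B = {v : T → ℝ | ∀ b : T, v b ≤ t + c b.1} := rfl
      rw [h2, hbox]
    simp_rw [hsec]
    rw [hγ, GumbelAux.lintegral_gumbel hq0]
    congr 1
    rw [hq]
    field_simp
    ring
  -- ties are null
  have hTie : ∀ b, b ≠ a → μ {ω | E b ω = E a ω + c b} = 0 := by
    intro b hb
    have hpair : μ.map (fun ω => (E b ω, E a ω)) = (μ.map (E b)).prod (μ.map (E a)) :=
      (ProbabilityTheory.indepFun_iff_map_prod_eq_prod_map_map
        (hEmeas b).aemeasurable (hEmeas a).aemeasurable).1 (hindep.indepFun hb)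
    have hsetm : MeasurableSet {p : ℝ × ℝ | p.1 = p.2 + c b} :=
      measurableSet_eq_fun measurable_fst (measurable_snd.add_const _)
    have heq : μ {ω | E b ω = E a ω + c b}
        = (μ.map (fun ω => (E b ω, E a ω))) {p : ℝ × ℝ | p.1 = p.2 + c b} := by
      rw [Measure.map_apply ((hEmeas b).prodMk (hEmeas a)) hsetm]
      rfl
    rw [heq, hpair, hmap, hmap, Measure.prod_apply hsetm]
    have hzero : ∀ x : ℝ, γ (Prod.mk x ⁻¹' {p : ℝ × ℝ | p.1 = p.2 + c b}) = 0 := by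
      intro x
      have : Prod.mk x ⁻¹' {p : ℝ × ℝ | p.1 = p.2 + c b} = {x - c b} := by
        ext y
        simp only [Set.mem_preimage, Set.mem_setOf_eq, Set.mem_singleton_iff]
        constructor <;> intro h <;> linarith
      rw [this, hγ, GumbelAux.gumbel_singleton]
    simp_rw [hzero]
    simp
  have hμAs : μ As = ENNReal.ofReal (P a) := by
    refine le_antisymm ?_ ?_
    · rw [← hμAw]
      exact measure_mono fun x hx b hb => (hx b hb).le
    · rw [← hμAw]
      have hsub : Aw ⊆ As ∪ ⋃ b, ⋃ (_ : b ≠ a), {ω | E b ω = E a ω + c b} := by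
        intro ω hω
        by_cases h : ω ∈ As
        · exact Or.inl h
        · right
          simp only [hAs, Set.mem_setOf_eq] at h
          push_neg at h
          obtain ⟨b, hb, hble⟩ := h
          refine Set.mem_iUnion.2 ⟨b, Set.mem_iUnion.2 ⟨hb, ?_⟩⟩
          have h1 : E b ω ≤ E a ω + c b := hω b hb
          show E b ω = E a ω + c b
          linarith
      have hnull : μ (⋃ b, ⋃ (_ : b ≠ a), {ω | E b ω = E a ω + c b}) = 0 :=
        measure_iUnion_null fun b => measure_iUnion_null fun hb => hTie b hb
      calc μ Aw ≤ μ (As ∪ ⋃ b, ⋃ (_ : b ≠ a), {ω | E b ω = E a ω + c b}) :=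
            measure_mono hsub
        _ ≤ μ As + μ (⋃ b, ⋃ (_ : b ≠ a), {ω | E b ω = E a ω + c b}) :=
            measure_union_le _ _
        _ = μ As := by rw [hnull, add_zero]
  -- sandwich
  have h1 : As ⊆ {ω | astar ω = a} := by
    intro ω h
    by_contra hne
    have h2 := hastar ω a
    have h3 : E (astar ω) ω < E a ω + c (astar ω) := h (astar ω) hne
    simp only [hc] at h3
    simp only [Set.mem_setOf_eq] at hne
    linarith
  have h2 : {ω | astar ω = a} ⊆ Aw := by
    intro ω h b hb
    have h3 := hastar ω b
    have h4 : astar ω = a := h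
    rw [h4] at h3
    show E b ω ≤ E a ω + c b
    simp only [hc]
    linarith
  have hfin : μ {ω | astar ω = a} = ENNReal.ofReal (P a) :=
    le_antisymm (by rw [← hμAw]; exact measure_mono h2)
      (by rw [← hμAs]; exact measure_mono h1)
  rw [hfin, ENNReal.toReal_ofReal hPa.le]
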